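/- Let G be a finite simple graph, s a vertex of G, and S a valid strategy for the firefighting process on (G, s). Then the set of vertices burned by S equals the set of vertices reachable from s in the induced subgraph G ∖ S; in particular, the number of vertices burned by S equals the number of vertices reachable from s in G ∖ S. -/

import Mathlib

open SimpleGraph

variable {V : Type*}

/-- The set of vertices burned by the end of time step `i` (0-indexed: `burnt G s S i` is `B_i`),
when a fire starts at `s` and the firefighter defends the vertices of the list `S` in order. -/
def burnt (G : SimpleGraph V) (s : V) (S : List V) : ℕ → Set V
  | 0 => {s}
  | i + 1 => burnt G s S i ∪
      {u | u ∉ S.take (i + 1) ∧ ∃ b ∈ burnt G s S i, G.Adj u b}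

/-- The set of all vertices ever burned by the strategy `S`. -/
def BurntSet (G : SimpleGraph V) (s : V) (S : List V) : Set V := ⋃ i, burnt G s S i

/-- A strategy is a sequence of pairwise distinct vertices; it is valid if the vertex defended
at each step is not yet burning at the start of that step. -/
def ValidStrategy (G : SimpleGraph V) (s : V) (S : List V) : Prop :=
  S.Nodup ∧ ∀ (i : ℕ) (h : i < S.length), S.get ⟨i, h⟩ ∉ burnt G s S i

/-- The number of vertices saved (i.e. not burned) by the strategy `S`. -/
noncomputable def sav (G : SimpleGraph V) (s : V) (S : List V) : ℕ := (BurntSet G s S)ᶜ.ncard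

/-- A valid strategy is minimal if every proper subsequence of it which is itself a valid
strategy saves strictly fewer vertices. -/
def MinimalStrategy (G : SimpleGraph V) (s : V) (S : List V) : Prop :=
  ValidStrategy G s S ∧ ∀ S' : List V, S'.Sublist S → S' ≠ S → ValidStrategy G s S' →
    sav G s S' < sav G s S

/-- A strategy is optimal if it is minimal and saves the maximum number of vertices. -/
def OptimalStrategy (G : SimpleGraph V) (s : V) (S : List V) : Prop :=
  MinimalStrategy G s S ∧ ∀ S' : List V, ValidStrategy G s S' → sav G s S' ≤ sav G s S

/-- A walk is an induced path if it is a path and the subgraph induced on its vertices has no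
edges besides the edges of the path. -/
def IsInducedPath (G : SimpleGraph V) {a b : V} (p : G.Walk a b) : Prop :=
  p.IsPath ∧ ∀ x ∈ p.support, ∀ y ∈ p.support, G.Adj x y → p.toSubgraph.Adj x y

/-- `u` is reachable from `s` in the subgraph of `G` induced on the complement of `A`. -/
def ReachAvoiding (G : SimpleGraph V) (A : Set V) (s u : V) : Prop :=
  ∃ p : G.Walk s u, ∀ x ∈ p.support, x ∉ A

lemma burnt_mono (G : SimpleGraph V) (s : V) (S : List V) : Monotone (burnt G s S) := by
  apply monotone_nat_of_le_succ
  intro i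
  exact Set.subset_union_left

lemma burnt_not_mem (G : SimpleGraph V) (s : V) (S : List V) (hS : ValidStrategy G s S)
    {u : V} {i : ℕ} (hu : u ∈ burnt G s S i) : u ∉ S := by
  intro hmem
  obtain ⟨j, hj, rfl⟩ := List.getElem_of_mem hmem
  have key : ∀ k, S[j] ∈ burnt G s S k → S[j] ∈ burnt G s S j := by
    intro k
    induction k with
    | zero => exact fun h => burnt_mono G s S (Nat.zero_le j) h
    | succ k ih =>
      intro h
      rcases Nat.lt_or_ge j (k + 1) with hlt | hge
      · rcases h with h' | ⟨hns, _⟩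
        · exact ih h'
        · exact absurd (List.mem_take_iff_getElem.2 ⟨j, by omega, rfl⟩) hns
      · exact burnt_mono G s S hge h
  have := hS.2 j hj
  simp only [List.get_eq_getElem] at this
  exact this (key i hu)

lemma burnt_reach (G : SimpleGraph V) (s : V) (S : List V) (hS : ValidStrategy G s S)
    {u : V} {i : ℕ} (hu : u ∈ burnt G s S i) : ReachAvoiding G {x | x ∈ S} s u := by
  induction i generalizing u with
  | zero =>
    have huv : u = s := hu
    subst huv
    exact ⟨Walk.nil, by
      intro x hx
      simp only [Walk.support_nil, List.mem_singleton] at hx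
      subst hx
      exact burnt_not_mem G x S hS (show x ∈ burnt G x S 0 from rfl)⟩
  | succ i ih =>
    rcases hu with h' | ⟨hns, b, hb, hadj⟩
    · exact ih h'
    · obtain ⟨p, hp⟩ := ih hb
      refine ⟨p.concat hadj.symm, ?_⟩
      intro x hx
      rw [Walk.support_concat, List.mem_append] at hx
      rcases hx with hx | hx
      · exact hp x hx
      · simp only [List.mem_singleton] at hx
        subst hx
        exact burnt_not_mem G s S hS
          (show x ∈ burnt G s S (i + 1) from Or.inr ⟨hns, b, hb, hadj⟩)

lemma reach_burnt_aux (G : SimpleGraph V) (s : V) (S : List V)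
    {w u : V} (q : G.Walk w u) (havoid : ∀ x ∈ q.support, x ∉ S)
    (hw : ∃ i, w ∈ burnt G s S i) : ∃ i, u ∈ burnt G s S i := by
  induction q with
  | nil => exact hw
  | @cons a b c h r ih =>
    obtain ⟨i, hi⟩ := hw
    have hb : b ∈ burnt G s S (i + 1) := by
      refine Or.inr ⟨fun hmem => ?_, a, hi, h.symm⟩
      · exact havoid b (by simp) (List.mem_of_mem_take hmem)
    exact ih (fun x hx => havoid x (by simp [hx])) ⟨i + 1, hb⟩

/-- For a valid strategy `S`, the set of vertices burned by `S` equals the set of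
vertices reachable from `s` in `G ∖ S`; in particular the number of burned vertices equals the
number of vertices reachable from `s` in `G ∖ S`. -/
theorem burned_eq_reachable {V : Type*} [Fintype V] (G : SimpleGraph V) (s : V)
    (S : List V) (hS : ValidStrategy G s S) :
    BurntSet G s S = {u : V | ReachAvoiding G {x | x ∈ S} s u} ∧
    (BurntSet G s S).ncard = {u : V | ReachAvoiding G {x | x ∈ S} s u}.ncard := by
  have heq : BurntSet G s S = {u : V | ReachAvoiding G {x | x ∈ S} s u} := by
    ext u
    constructor
    · rintro ⟨_, ⟨i, rfl⟩, hu⟩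
      exact burnt_reach G s S hS hu
    · rintro ⟨p, hp⟩
      obtain ⟨i, hi⟩ := reach_burnt_aux G s S p (fun x hx => hp x hx)
        ⟨0, show s ∈ burnt G s S 0 from rfl⟩
      exact Set.mem_iUnion.2 ⟨i, hi⟩
  exact ⟨heq, by rw [heq]⟩
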